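/- arXiv:2407.15201 — 4 statements merged into one kernel-verified Lean document; each statement's English description precedes it below -/
import Mathlib

section
/- For every positive integer n, S_q(2n) = 2q · S_q(n) + n·q. -/
open scoped BigOperators

/-- distance from `x` to the nearest integer -/
noncomputable def tau (x : ℝ) : ℝ := |x - round x|

/-- q-weighted binary digit sum: `s_q(n) = Σ ω_i q^(i+1)` -/
noncomputable def sdigq (q : ℝ) (n : ℕ) : ℝ :=
  ∑ i ∈ Finset.range n, if n.testBit i then q ^ (i + 1) else 0

/-- `S_q(n) = Σ_{k<n} s_q(k)` -/
noncomputable def Sdigq (q : ℝ) (n : ℕ) : ℝ := ∑ k ∈ Finset.range n, sdigq q k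

/-- Takagi–Landsberg function -/
noncomputable def Ta (a x : ℝ) : ℝ := ∑' n : ℕ, a ^ n * tau (2 ^ n * x)
lemma sdigq_eq (q : ℝ) (n m : ℕ) (h : n ≤ m) :
    sdigq q n = ∑ i ∈ Finset.range m, if n.testBit i then q ^ (i + 1) else 0 := by
  unfold sdigq
  rw [← Finset.sum_range_add_sum_Ico _ h]
  have : ∀ i ∈ Finset.Ico n m, (if n.testBit i then q ^ (i + 1) else 0) = 0 := by
    intro i hi
    simp only [Finset.mem_Ico] at hi
    rw [Nat.testBit_eq_false_of_lt]
    · simp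
    · calc n < 2 ^ n := Nat.lt_two_pow_self
        _ ≤ 2 ^ i := Nat.pow_le_pow_right (by norm_num) hi.1
  rw [Finset.sum_eq_zero this, add_zero]

lemma shift_sum (q : ℝ) (k m : ℕ) :
    (∑ i ∈ Finset.range m, if k.testBit i then q ^ (i + 1 + 1) else 0)
      = q * ∑ i ∈ Finset.range m, if k.testBit i then q ^ (i + 1) else 0 := by
  rw [Finset.mul_sum]
  apply Finset.sum_congr rfl
  intro i _
  split <;> ring

lemma sdigq_two_mul (q : ℝ) (k : ℕ) : sdigq q (2 * k) = q * sdigq q k := by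
  rw [sdigq_eq q (2 * k) (2 * k + 1) (Nat.le_succ _),
      Finset.sum_range_succ', sdigq_eq q k (2 * k) (by omega)]
  have h0 : (2 * k).testBit 0 = false := by
    simp [Nat.testBit_zero, Nat.mul_mod_right]
  simp only [Nat.testBit_succ, Nat.mul_div_cancel_left _ (by norm_num : 0 < 2), h0, Bool.false_eq_true, if_false, add_zero]
  exact shift_sum q k (2 * k)

lemma sdigq_two_mul_add_one (q : ℝ) (k : ℕ) :
    sdigq q (2 * k + 1) = q + q * sdigq q k := by
  rw [sdigq_eq q (2 * k + 1) (2 * k + 1) le_rfl,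
      Finset.sum_range_succ', sdigq_eq q k (2 * k) (by omega)]
  have hsucc : ∀ i, (2 * k + 1).testBit (i + 1) = k.testBit i := by
    intro i
    rw [Nat.testBit_succ]
    congr 1
    omega
  have h0 : (2 * k + 1).testBit 0 = true := by
    simp [Nat.testBit_zero, Nat.mul_add_mod]
  simp only [hsucc, h0, if_true]
  rw [shift_sum q k (2 * k)]
  ring

theorem Sq_two_mul_aux (q : ℝ) (n : ℕ) :
    Sdigq q (2 * n) = 2 * q * Sdigq q n + n * q := by
  induction n with
  | zero => simp [Sdigq]
  | succ n ih =>
    have h2 : 2 * (n + 1) = (2 * n + 1) + 1 := by ring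
    rw [h2]
    unfold Sdigq
    rw [Finset.sum_range_succ, Finset.sum_range_succ, Finset.sum_range_succ]
    have ihs : ∑ k ∈ Finset.range (2 * n), sdigq q k
        = 2 * q * ∑ k ∈ Finset.range n, sdigq q k + n * q := ih
    rw [ihs, sdigq_two_mul, sdigq_two_mul_add_one]
    push_cast
    ring

theorem Sq_two_mul (q : ℝ) (n : ℕ) (hn : 0 < n) :
    Sdigq q (2 * n) = 2 * q * Sdigq q n + n * q := Sq_two_mul_aux q n
end

section
/- For every positive integer n, with p = 2^{⌊log₂ n⌋} and k = ⌊log₂ n⌋, it holds that S_q(n + 2p) = S_q(n) + S_q(2p) + n·q^{k+2}. -/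
open scoped BigOperators

lemma sdigq_ext (q : ℝ) (n N : ℕ) (h : n ≤ N) :
    sdigq q n = ∑ i ∈ Finset.range N, if n.testBit i then q ^ (i + 1) else 0 := by
  unfold sdigq
  refine Finset.sum_subset (Finset.range_subset_range.mpr h) ?_
  intro i _ hi
  simp only [Finset.mem_range, not_lt] at hi
  have : n.testBit i = false :=
    Nat.testBit_lt_two_pow (lt_of_le_of_lt hi (Nat.lt_two_pow_self (n := i)))
  simp [this]

lemma testBit_two_pow_add' {J m : ℕ} (h : m < 2 ^ J) (i : ℕ) :
    (2 ^ J + m).testBit i = if i = J then true else m.testBit i := by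
  have := Nat.testBit_two_pow_mul_add 1 h i
  rw [Nat.mul_one] at this
  rw [this]
  rcases lt_trichotomy i J with hi | hi | hi
  · simp [hi, hi.ne]
  · simp [hi, Nat.sub_self]
  · have h1 : ¬ i < J := not_lt.mpr hi.le
    have h2 : i - J ≠ 0 := by omega
    have h3 : m.testBit i = false :=
      Nat.testBit_lt_two_pow (lt_of_lt_of_le h (Nat.pow_le_pow_right (by norm_num) hi.le))
    have h4 : Nat.testBit 1 (i - J) = false := by
      refine Nat.testBit_lt_two_pow ?_
      have : 1 ≤ i - J := by omega
      calc 1 < 2 ^ 1 := by norm_num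
        _ ≤ 2 ^ (i - J) := Nat.pow_le_pow_right (by norm_num) this
    simp [h1, hi.ne', h3, h4]

lemma sdigq_two_pow_add (q : ℝ) {J m : ℕ} (h : m < 2 ^ J) :
    sdigq q (2 ^ J + m) = q ^ (J + 1) + sdigq q m := by
  have hJN : J ∈ Finset.range (2 ^ J + m) := by
    simp only [Finset.mem_range]
    have := Nat.lt_two_pow_self (n := J)
    omega
  have hmJ : m.testBit J = false := Nat.testBit_lt_two_pow h
  rw [sdigq_ext q (2 ^ J + m) (2 ^ J + m) le_rfl, sdigq_ext q m (2 ^ J + m) (Nat.le_add_left _ _),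
    ← Finset.add_sum_erase _ (fun i => if (2 ^ J + m).testBit i then q ^ (i + 1) else 0) hJN,
    ← Finset.add_sum_erase _ (fun i => if m.testBit i then q ^ (i + 1) else 0) hJN]
  simp only [testBit_two_pow_add' h J, hmJ, Bool.false_eq_true, if_true, if_false, add_zero, zero_add, if_pos rfl]
  congr 1
  apply Finset.sum_congr rfl
  intro i hi
  have hiJ : i ≠ J := (Finset.mem_erase.mp hi).1
  rw [testBit_two_pow_add' h i, if_neg hiJ]

theorem Sq_add_two_p (q : ℝ) (n : ℕ) (hn : 0 < n) :
    Sdigq q (n + 2 * 2 ^ Nat.log 2 n) =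
      Sdigq q n + Sdigq q (2 * 2 ^ Nat.log 2 n) + n * q ^ (Nat.log 2 n + 2) := by
  set k := Nat.log 2 n with hk
  have h2p : 2 * 2 ^ k = 2 ^ (k + 1) := (pow_succ' 2 k).symm
  have hnlt : n < 2 ^ (k + 1) := Nat.lt_pow_succ_log_self (by norm_num) n
  rw [h2p, add_comm n (2 ^ (k + 1))]
  unfold Sdigq
  rw [Finset.sum_range_add]
  have key : ∀ m ∈ Finset.range n, sdigq q (2 ^ (k + 1) + m) = q ^ (k + 2) + sdigq q m := by
    intro m hm
    simp only [Finset.mem_range] at hm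
    exact sdigq_two_pow_add q (hm.trans hnlt)
  rw [Finset.sum_congr rfl key, Finset.sum_add_distrib, Finset.sum_const, Finset.card_range]
  rw [nsmul_eq_mul]
  push_cast
  ring
end

section
/- Suppose |a₀| < 1, |a₁| < 1, g₀ and g₁ are continuous on [0,1], and a₀·g₁(1)/(1−a₁) + g₀(1) = a₁·g₀(0)/(1−a₀) + g₁(0). Then there exists a unique continuous function f : [0,1] → ℝ satisfying f(x/2) = a₀·f(x) + g₀(x) and f((x+1)/2) = a₁·f(x) + g₁(x) for all x ∈ [0,1]. -/
open scoped BigOperators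

namespace DeRhamAux

/-- projection of `ℝ` onto `[0,1]` -/
noncomputable def pI : ℝ → Set.Icc (0:ℝ) 1 := Set.projIcc 0 1 zero_le_one

lemma coe_pI (x : ℝ) (hx : x ∈ Set.Icc (0:ℝ) 1) : ((pI x : ℝ)) = x := by
  rw [pI, Set.projIcc_of_mem zero_le_one hx]

lemma continuous_pI : Continuous pI := continuous_projIcc

lemma mem0 : (0:ℝ) ∈ Set.Icc (0:ℝ) 1 := by norm_num
lemma mem1 : (1:ℝ) ∈ Set.Icc (0:ℝ) 1 := by norm_num

/-- the de Rham transfer operator, as a function on `ℝ` -/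
noncomputable def Tf (a₀ a₁ : ℝ) (g₀ g₁ : ℝ → ℝ) (f : C(Set.Icc (0:ℝ) 1, ℝ)) : ℝ → ℝ :=
  fun x =>
    if x ≤ 1/2 then a₀ * f (pI (2*x)) + g₀ ((pI (2*x) : ℝ))
    else a₁ * f (pI (2*x - 1)) + g₁ ((pI (2*x - 1) : ℝ))

end DeRhamAux

open DeRhamAux in
theorem deRham_existence_uniqueness (a₀ a₁ : ℝ) (ha₀ : |a₀| < 1) (ha₁ : |a₁| < 1)
    (g₀ g₁ : ℝ → ℝ) (hg₀ : ContinuousOn g₀ (Set.Icc 0 1))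
    (hg₁ : ContinuousOn g₁ (Set.Icc 0 1))
    (hcons : a₀ * g₁ 1 / (1 - a₁) + g₀ 1 = a₁ * g₀ 0 / (1 - a₀) + g₁ 0) :
    (∃ f : ℝ → ℝ, ContinuousOn f (Set.Icc 0 1) ∧
      ∀ x ∈ Set.Icc (0:ℝ) 1,
        f (x / 2) = a₀ * f x + g₀ x ∧ f ((x + 1) / 2) = a₁ * f x + g₁ x) ∧
    (∀ f g : ℝ → ℝ,
      (ContinuousOn f (Set.Icc 0 1) ∧ ∀ x ∈ Set.Icc (0:ℝ) 1,
        f (x / 2) = a₀ * f x + g₀ x ∧ f ((x + 1) / 2) = a₁ * f x + g₁ x) →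
      (ContinuousOn g (Set.Icc 0 1) ∧ ∀ x ∈ Set.Icc (0:ℝ) 1,
        g (x / 2) = a₀ * g x + g₀ x ∧ g ((x + 1) / 2) = a₁ * g x + g₁ x) →
      Set.EqOn f g (Set.Icc 0 1)) := by
  have ha₀' := abs_lt.mp ha₀
  have ha₁' := abs_lt.mp ha₁
  have h1a₀ : (1:ℝ) - a₀ ≠ 0 := by linarith [ha₀'.2]
  have h1a₁ : (1:ℝ) - a₁ ≠ 0 := by linarith [ha₁'.2]
  set c₀ : ℝ := g₀ 0 / (1 - a₀) with hc₀
  set c₁ : ℝ := g₁ 1 / (1 - a₁) with hc₁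
  have hc₀' : a₀ * c₀ + g₀ 0 = c₀ := by rw [hc₀]; field_simp; ring
  have hc₁' : a₁ * c₁ + g₁ 1 = c₁ := by rw [hc₁]; field_simp; ring
  have hcons' : a₀ * c₁ + g₀ 1 = a₁ * c₀ + g₁ 0 := by
    rw [hc₀, hc₁, ← mul_div_assoc, ← mul_div_assoc]; exact hcons
  constructor
  · -- existence
    -- the space of candidate continuous maps with prescribed endpoint values
    set P : C(Set.Icc (0:ℝ) 1, ℝ) → Prop :=
      fun f => f ⟨0, mem0⟩ = c₀ ∧ f ⟨1, mem1⟩ = c₁ with hP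
    haveI hcs : CompleteSpace {f : C(Set.Icc (0:ℝ) 1, ℝ) // P f} := by
      have hclosed : IsClosed {f : C(Set.Icc (0:ℝ) 1, ℝ) | P f} := by
        have h0 : IsClosed {f : C(Set.Icc (0:ℝ) 1, ℝ) | f ⟨0, mem0⟩ = c₀} :=
          isClosed_eq (ContinuousEvalConst.continuous_eval_const _) continuous_const
        have h1 : IsClosed {f : C(Set.Icc (0:ℝ) 1, ℝ) | f ⟨1, mem1⟩ = c₁} :=
          isClosed_eq (ContinuousEvalConst.continuous_eval_const _) continuous_const
        exact h0.inter h1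
      exact hclosed.completeSpace_coe
    haveI hne : Nonempty {f : C(Set.Icc (0:ℝ) 1, ℝ) // P f} := by
      refine ⟨⟨⟨fun y => c₀ + (c₁ - c₀) * (y:ℝ), by fun_prop⟩, ?_, ?_⟩⟩ <;> simp
    -- continuity of auxiliary composites
    have hG₀ : Continuous (fun x : ℝ => g₀ ((pI x : ℝ))) :=
      hg₀.comp_continuous (continuous_subtype_val.comp continuous_pI) (fun x => (pI x).2)
    have hG₁ : Continuous (fun x : ℝ => g₁ ((pI x : ℝ))) :=
      hg₁.comp_continuous (continuous_subtype_val.comp continuous_pI) (fun x => (pI x).2)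
    have hTcont : ∀ f : {f : C(Set.Icc (0:ℝ) 1, ℝ) // P f},
        Continuous (Tf a₀ a₁ g₀ g₁ f.1) := by
      rintro ⟨f, hf0, hf1⟩
      unfold Tf
      apply Continuous.if_le
      · exact (continuous_const.mul (f.continuous.comp (continuous_pI.comp
          (by fun_prop)))).add (hG₀.comp (by fun_prop))
      · exact (continuous_const.mul (f.continuous.comp (continuous_pI.comp
          (by fun_prop)))).add (hG₁.comp (by fun_prop))
      · exact continuous_id
      · exact continuous_const
      · intro x hx
        subst hx
        have p1 : pI (2 * (1/2:ℝ)) = ⟨1, mem1⟩ := by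
          rw [show (2:ℝ)*(1/2) = 1 by norm_num]; exact Subtype.ext (coe_pI 1 mem1)
        have p0 : pI (2 * (1/2:ℝ) - 1) = ⟨0, mem0⟩ := by
          rw [show (2:ℝ)*(1/2) - 1 = 0 by norm_num]; exact Subtype.ext (coe_pI 0 mem0)
        rw [p1, p0]
        simp only [ContinuousMap.coe_mk]
        show a₀ * f ⟨1, mem1⟩ + g₀ 1 = a₁ * f ⟨0, mem0⟩ + g₁ 0
        rw [hf0, hf1]
        exact hcons'
    -- the operator
    set T : {f : C(Set.Icc (0:ℝ) 1, ℝ) // P f} → {f : C(Set.Icc (0:ℝ) 1, ℝ) // P f} :=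
      fun f => ⟨⟨fun y => Tf a₀ a₁ g₀ g₁ f.1 (y:ℝ),
        (hTcont f).comp continuous_subtype_val⟩, by
          constructor
          · show Tf a₀ a₁ g₀ g₁ f.1 0 = c₀
            unfold Tf
            rw [if_pos (by norm_num : (0:ℝ) ≤ 1/2)]
            rw [show (2:ℝ) * 0 = 0 by norm_num,
              show pI 0 = ⟨0, mem0⟩ from Subtype.ext (coe_pI 0 mem0), f.2.1]
            exact hc₀'
          · show Tf a₀ a₁ g₀ g₁ f.1 1 = c₁
            unfold Tf
            rw [if_neg (by norm_num : ¬ (1:ℝ) ≤ 1/2)]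
            rw [show (2:ℝ) * 1 - 1 = 1 by norm_num,
              show pI 1 = ⟨1, mem1⟩ from Subtype.ext (coe_pI 1 mem1), f.2.2]
            exact hc₁'⟩ with hT
    -- contraction
    set K : NNReal := ‖a₀‖₊ ⊔ ‖a₁‖₊ with hKdef
    have hKcoe : (K : ℝ) = max |a₀| |a₁| := by
      simp [hKdef, Real.norm_eq_abs]
    have hK1 : K < 1 := by
      rw [← NNReal.coe_lt_coe, hKcoe, NNReal.coe_one]
      exact max_lt ha₀ ha₁
    have hLip : LipschitzWith K T := by
      apply LipschitzWith.of_dist_le_mul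
      intro f g
      rw [Subtype.dist_eq (T f) (T g), Subtype.dist_eq f g]
      have hKd : (0:ℝ) ≤ K * dist f.1 g.1 := by positivity
      rw [ContinuousMap.dist_le hKd]
      intro y
      show dist (Tf a₀ a₁ g₀ g₁ f.1 (y:ℝ)) (Tf a₀ a₁ g₀ g₁ g.1 (y:ℝ)) ≤ K * dist f.1 g.1
      unfold Tf
      have hd : dist f.1 g.1 = dist f g := (Subtype.dist_eq f g).symm
      split_ifs with h
      · rw [Real.dist_eq]
        have : a₀ * f.1 (pI (2*(y:ℝ))) + g₀ ((pI (2*(y:ℝ)) : ℝ))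
            - (a₀ * g.1 (pI (2*(y:ℝ))) + g₀ ((pI (2*(y:ℝ)) : ℝ)))
            = a₀ * (f.1 (pI (2*(y:ℝ))) - g.1 (pI (2*(y:ℝ)))) := by ring
        rw [this, abs_mul]
        have h1 : |f.1 (pI (2*(y:ℝ))) - g.1 (pI (2*(y:ℝ)))| ≤ dist f.1 g.1 := by
          rw [← Real.dist_eq]; exact ContinuousMap.dist_apply_le_dist _
        have h2 : |a₀| ≤ (K:ℝ) := by rw [hKcoe]; exact le_max_left _ _
        exact mul_le_mul h2 h1 (abs_nonneg _) (by positivity)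
      · rw [Real.dist_eq]
        have : a₁ * f.1 (pI (2*(y:ℝ) - 1)) + g₁ ((pI (2*(y:ℝ) - 1) : ℝ))
            - (a₁ * g.1 (pI (2*(y:ℝ) - 1)) + g₁ ((pI (2*(y:ℝ) - 1) : ℝ)))
            = a₁ * (f.1 (pI (2*(y:ℝ) - 1)) - g.1 (pI (2*(y:ℝ) - 1))) := by ring
        rw [this, abs_mul]
        have h1 : |f.1 (pI (2*(y:ℝ) - 1)) - g.1 (pI (2*(y:ℝ) - 1))| ≤ dist f.1 g.1 := by
          rw [← Real.dist_eq]; exact ContinuousMap.dist_apply_le_dist _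
        have h2 : |a₁| ≤ (K:ℝ) := by rw [hKcoe]; exact le_max_right _ _
        exact mul_le_mul h2 h1 (abs_nonneg _) (by positivity)
    have hcontr : ContractingWith K T := ⟨hK1, hLip⟩
    set fhat := hcontr.fixedPoint T with hfhat
    have hfix : T fhat = fhat := hcontr.fixedPoint_isFixedPt
    -- extract the solution
    refine ⟨fun x => fhat.1 (pI x), (fhat.1.continuous.comp continuous_pI).continuousOn, ?_⟩
    intro x hx
    have happ : ∀ y : ℝ, y ∈ Set.Icc (0:ℝ) 1 → fhat.1 (pI y) = Tf a₀ a₁ g₀ g₁ fhat.1 y := by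
      intro y hy
      conv_lhs => rw [← hfix]
      show Tf a₀ a₁ g₀ g₁ fhat.1 ((pI y : ℝ)) = Tf a₀ a₁ g₀ g₁ fhat.1 y
      rw [coe_pI y hy]
    obtain ⟨hx0, hx1⟩ := hx
    constructor
    · have hx2 : x/2 ∈ Set.Icc (0:ℝ) 1 := ⟨by linarith, by linarith⟩
      beta_reduce
      rw [happ (x/2) hx2]
      unfold Tf
      rw [if_pos (by linarith : x/2 ≤ 1/2), show (2:ℝ) * (x/2) = x by ring,
        coe_pI x ⟨hx0, hx1⟩]
    · have hx2 : (x+1)/2 ∈ Set.Icc (0:ℝ) 1 := ⟨by linarith, by linarith⟩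
      beta_reduce
      rw [happ ((x+1)/2) hx2]
      unfold Tf
      by_cases h : (x+1)/2 ≤ 1/2
      · have hx0' : x = 0 := by linarith
        subst hx0'
        rw [if_pos h, show (2:ℝ) * ((0+1)/2) = 1 by norm_num,
          show pI 1 = ⟨1, mem1⟩ from Subtype.ext (coe_pI 1 mem1), fhat.2.2,
          show pI 0 = ⟨0, mem0⟩ from Subtype.ext (coe_pI 0 mem0), fhat.2.1]
        exact hcons'
      · rw [if_neg h, show (2:ℝ) * ((x+1)/2) - 1 = x by ring, coe_pI x ⟨hx0, hx1⟩]
  · -- uniqueness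
    rintro f g ⟨hfc, hfe⟩ ⟨hgc, hge⟩
    have hcont : ContinuousOn (fun x => |f x - g x|) (Set.Icc (0:ℝ) 1) :=
      (hfc.sub hgc).abs
    obtain ⟨x₀, hx₀, hmax⟩ := isCompact_Icc.exists_isMaxOn
      (Set.nonempty_Icc.mpr zero_le_one) hcont
    set M : ℝ := |f x₀ - g x₀| with hM
    have hM0 : 0 ≤ M := abs_nonneg _
    set K : ℝ := max |a₀| |a₁| with hK
    have hK1 : K < 1 := max_lt ha₀ ha₁
    have hK0 : 0 ≤ K := le_trans (abs_nonneg _) (le_max_left _ _)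
    have key : M ≤ K * M := by
      by_cases h : x₀ ≤ 1/2
      · have hy : 2*x₀ ∈ Set.Icc (0:ℝ) 1 := ⟨by linarith [hx₀.1], by linarith⟩
        have e1 := (hfe (2*x₀) hy).1
        have e2 := (hge (2*x₀) hy).1
        have hx₀e : (2*x₀)/2 = x₀ := by ring
        rw [hx₀e] at e1 e2
        have hMe : M = |a₀| * |f (2*x₀) - g (2*x₀)| := by
          rw [hM, e1, e2, ← abs_mul]; ring_nf
        have hle : |f (2*x₀) - g (2*x₀)| ≤ M := hmax hy
        calc M = |a₀| * |f (2*x₀) - g (2*x₀)| := hMe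
          _ ≤ K * M := mul_le_mul (le_max_left _ _) hle (abs_nonneg _) hK0
      · have hy : 2*x₀ - 1 ∈ Set.Icc (0:ℝ) 1 := ⟨by linarith, by linarith [hx₀.2]⟩
        have e1 := (hfe (2*x₀ - 1) hy).2
        have e2 := (hge (2*x₀ - 1) hy).2
        have hx₀e : (2*x₀ - 1 + 1)/2 = x₀ := by ring
        rw [hx₀e] at e1 e2
        have hMe : M = |a₁| * |f (2*x₀ - 1) - g (2*x₀ - 1)| := by
          rw [hM, e1, e2, ← abs_mul]; ring_nf
        have hle : |f (2*x₀ - 1) - g (2*x₀ - 1)| ≤ M := hmax hy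
        calc M = |a₁| * |f (2*x₀ - 1) - g (2*x₀ - 1)| := hMe
          _ ≤ K * M := mul_le_mul (le_max_right _ _) hle (abs_nonneg _) hK0
    have hMz : M = 0 := by nlinarith
    intro x hx
    have h1 : |f x - g x| ≤ M := hmax hx
    have h2 : |f x - g x| = 0 := le_antisymm (hMz ▸ h1) (abs_nonneg _)
    have := abs_eq_zero.mp h2
    exact sub_eq_zero.mp this
end

section
/- Let q be real with |q| > 1/2 and q ≠ 1, and set a = 1/(2q). For every positive integer n, with k = ⌊log₂ n⌋ and u = log₂ n − k, it holds that (1/n)·S_q(n) = (q/2)·((1 − q^{k+1})/(1 − q) − q^k · 2^{1−u} · T_a(2^{u−1})). -/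
open scoped BigOperators

lemma tau_add_nat (x : ℝ) (m : ℕ) : tau (x + m) = tau x := by
  unfold tau
  rw [round_add_natCast]
  push_cast
  ring_nf

lemma tau_natCast (m : ℕ) : tau m = 0 := by
  unfold tau
  rw [round_natCast]
  simp

lemma tau_eq_self {x : ℝ} (h0 : 0 ≤ x) (h : x ≤ 1/2) : tau x = x := by
  unfold tau
  rcases lt_or_eq_of_le h with h' | h'
  · have : round x = 0 := by
      rw [round_eq, Int.floor_eq_zero_iff]
      simp only [Set.mem_Ico]
      constructor <;> linarith
    simp [this, abs_of_nonneg h0]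
  · subst h'; norm_num [round_eq]

lemma tau_eq_one_sub {x : ℝ} (h : 1/2 ≤ x) (h1 : x ≤ 1) : tau x = 1 - x := by
  unfold tau
  have : round x = 1 := by
    rw [round_eq]
    have : ⌊x + 1/2⌋ = 1 := by
      apply Int.floor_eq_iff.mpr
      constructor <;> push_cast <;> linarith
    omega
  rw [this]; push_cast
  rw [abs_of_nonpos (by linarith)]; ring



lemma testBit_iff_le_mod (n i : ℕ) : n.testBit i = true ↔ 2^i ≤ n % 2^(i+1) := by
  rw [Nat.testBit_eq_decide_div_mod_eq]
  have h2 : 0 < 2^i := Nat.pow_pos (by norm_num)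
  have key : n % 2^(i+1) / 2^i = n / 2^i % 2 := by
    rw [pow_succ, Nat.mod_mul_right_div_self]
  have hr : n % 2^(i+1) < 2^(i+1) := Nat.mod_lt _ (Nat.pow_pos (by norm_num))
  have hdlt : n % 2^(i+1) / 2^i < 2 := by
    apply Nat.div_lt_of_lt_mul; rw [← pow_succ]; exact hr
  simp only [decide_eq_true_eq]
  constructor
  · intro h
    have h1 : 1 ≤ n % 2^(i+1) / 2^i := by omega
    have := (Nat.le_div_iff_mul_le h2).mp h1
    omega
  · intro h
    have h1 : 1 ≤ n % 2^(i+1) / 2^i := (Nat.le_div_iff_mul_le h2).mpr (by omega)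
    omega

lemma count_bit (i : ℕ) : ∀ n : ℕ,
    (((Finset.range n).filter (fun m => m.testBit i)).card : ℝ)
      = n/2 - 2^i * tau (n / 2^(i+1)) := by
  intro n
  induction n with
  | zero => simp [tau]
  | succ n ih =>
    have hPpos : (0:ℕ) < 2^(i+1) := Nat.pow_pos (by norm_num)
    have hP : (0:ℝ) < 2^(i+1) := by positivity
    set Q := n / 2^(i+1) with hQ
    set r := n % 2^(i+1) with hrdef
    have hnd : 2^(i+1) * Q + r = n := Nat.div_add_mod n (2^(i+1))
    have hr : r < 2^(i+1) := Nat.mod_lt _ hPpos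
    have e1 : (n:ℝ)/2^(i+1) = (r:ℝ)/2^(i+1) + Q := by
      field_simp
      rw [← hnd]; push_cast; ring
    have e2 : ((n+1:ℕ):ℝ)/2^(i+1) = ((r:ℝ)+1)/2^(i+1) + Q := by
      field_simp
      rw [← hnd]; push_cast; ring
    have t1 : tau ((n:ℝ)/2^(i+1)) = tau ((r:ℝ)/2^(i+1)) := by rw [e1, tau_add_nat]
    have t2 : tau (((n:ℕ)+1:ℝ)/2^(i+1)) = tau (((r:ℝ)+1)/2^(i+1)) := by
      rw [show ((n:ℝ)+1) = ((n+1:ℕ):ℝ) by push_cast; ring, e2, tau_add_nat]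
    have hpow : (2:ℝ)^(i+1) = 2^i * 2 := by rw [pow_succ]
    have h2i : (0:ℝ) < 2^i := by positivity
    rw [Finset.range_add_one, Finset.filter_insert]
    by_cases hb : n.testBit i
    · have hbr : 2^i ≤ r := (testBit_iff_le_mod n i).mp hb
      have hbrR : (2:ℝ)^i ≤ r := by exact_mod_cast hbr
      have hrR : (r:ℝ) + 1 ≤ 2^(i+1) := by exact_mod_cast hr
      have ht1 : tau ((n:ℝ)/2^(i+1)) = 1 - (r:ℝ)/2^(i+1) := by
        rw [t1]; apply tau_eq_one_sub
        · rw [le_div_iff₀ hP]; linarith [hpow]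
        · rw [div_le_one hP]; linarith
      have ht2 : tau (((n:ℝ)+1)/2^(i+1)) = 1 - ((r:ℝ)+1)/2^(i+1) := by
        rw [t2]; apply tau_eq_one_sub
        · rw [le_div_iff₀ hP]; linarith [hpow]
        · rw [div_le_one hP]; linarith
      rw [ht1] at ih
      rw [if_pos hb, Finset.card_insert_of_notMem (by simp)]
      push_cast
      rw [ih, ht2]
      field_simp
      ring
    · have hbr : r < 2^i := by
        by_contra hc
        exact hb ((testBit_iff_le_mod n i).mpr (by omega))
      have hbrR : (r:ℝ) < 2^i := by exact_mod_cast hbr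
      have hbrR' : (r:ℝ) + 1 ≤ 2^i := by exact_mod_cast hbr
      have ht1 : tau ((n:ℝ)/2^(i+1)) = (r:ℝ)/2^(i+1) := by
        rw [t1]; apply tau_eq_self
        · positivity
        · rw [div_le_div_iff₀ hP (by norm_num : (0:ℝ) < 2)]; linarith [hpow]
      have ht2 : tau (((n:ℝ)+1)/2^(i+1)) = ((r:ℝ)+1)/2^(i+1) := by
        rw [t2]; apply tau_eq_self
        · positivity
        · rw [div_le_div_iff₀ hP (by norm_num : (0:ℝ) < 2)]; linarith [hpow]
      rw [ht1] at ih
      rw [if_neg hb]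
      push_cast
      rw [ih, ht2]
      field_simp
      ring

lemma sdigq_eq_range (q : ℝ) (m K : ℕ) (hm : m < 2^K) :
    sdigq q m = ∑ i ∈ Finset.range K, if m.testBit i then q ^ (i + 1) else 0 := by
  unfold sdigq
  have hz : ∀ N : ℕ, ∀ i ∈ Finset.range (m + K), i ∉ Finset.range N →
      (if m.testBit i then q ^ (i+1) else 0) = 0 → True := fun _ _ _ _ _ => trivial
  have h1 : ∑ i ∈ Finset.range m, (if m.testBit i then q ^ (i + 1) else 0)
      = ∑ i ∈ Finset.range (m + K), (if m.testBit i then q ^ (i + 1) else 0) := by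
    apply Finset.sum_subset (Finset.range_subset_range.mpr (Nat.le_add_right m K))
    intro i _ hi
    simp only [Finset.mem_range, not_lt] at hi
    rw [Nat.testBit_eq_false_of_lt (lt_of_le_of_lt hi (Nat.lt_two_pow_self (n := i)))]
    simp
  have h2 : ∑ i ∈ Finset.range K, (if m.testBit i then q ^ (i + 1) else 0)
      = ∑ i ∈ Finset.range (m + K), (if m.testBit i then q ^ (i + 1) else 0) := by
    apply Finset.sum_subset (Finset.range_subset_range.mpr (Nat.le_add_left K m))
    intro i _ hi
    simp only [Finset.mem_range, not_lt] at hi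
    rw [Nat.testBit_eq_false_of_lt (lt_of_lt_of_le hm (Nat.pow_le_pow_right (by norm_num) hi))]
    simp
  rw [h1, ← h2]

lemma Sdigq_eq (q : ℝ) (n : ℕ) :
    Sdigq q n = ∑ i ∈ Finset.range (Nat.log 2 n + 1),
      q^(i+1) * ((n:ℝ)/2 - 2^i * tau ((n:ℝ)/2^(i+1))) := by
  set K := Nat.log 2 n + 1 with hK
  have hnK : n < 2^K := Nat.lt_pow_succ_log_self (by norm_num) n
  unfold Sdigq
  rw [Finset.sum_congr rfl (fun m hm => sdigq_eq_range q m K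
    (lt_of_lt_of_le (Finset.mem_range.mp hm) hnK.le))]
  rw [Finset.sum_comm]
  apply Finset.sum_congr rfl
  intro i _
  rw [← Finset.sum_filter, Finset.sum_const, nsmul_eq_mul, count_bit i n]
  ring

lemma Ta_eval (a : ℝ) (n K : ℕ) :
    Ta a ((n:ℝ)/2^K) = ∑ m ∈ Finset.range K, a^m * tau ((n:ℝ) * 2^m / 2^K) := by
  unfold Ta
  rw [tsum_eq_sum (s := Finset.range K) ?_]
  · apply Finset.sum_congr rfl
    intro m _
    rw [show (2:ℝ)^m * ((n:ℝ)/2^K) = (n:ℝ)*2^m/2^K from by ring]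
  · intro m hm
    simp only [Finset.mem_range, not_lt] at hm
    have harg : (2:ℝ)^m * ((n:ℝ)/2^K) = ((n * 2^(m-K) : ℕ) : ℝ) := by
      push_cast
      rw [show m = (m-K)+K by omega, pow_add]
      field_simp
      simp [mul_comm]
    rw [harg, tau_natCast, mul_zero]

theorem generalized_trollope_delange (q : ℝ) (hq : 1/2 < |q|) (hq1 : q ≠ 1)
    (n : ℕ) (hn : 0 < n) :
    (1 / (n : ℝ)) * Sdigq q n =
      (q / 2) * ((1 - q ^ (Nat.log 2 n + 1)) / (1 - q)
        - q ^ Nat.log 2 n * (2 : ℝ) ^ ((1 : ℝ) - (Real.logb 2 n - Nat.log 2 n))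
          * Ta (1/(2*q)) ((2 : ℝ) ^ ((Real.logb 2 n - Nat.log 2 n) - 1))) := by
  have hq0 : q ≠ 0 := by
    intro h; rw [h] at hq; simp at hq; linarith
  have hn' : (0:ℝ) < n := by exact_mod_cast hn
  have hnne : (n:ℝ) ≠ 0 := ne_of_gt hn'
  set k := Nat.log 2 n with hk
  set K := k + 1 with hKdef
  have two_pos : (0:ℝ) < 2 := by norm_num
  have hx : (2 : ℝ) ^ ((Real.logb 2 n - (k:ℝ)) - 1) = (n:ℝ)/2^K := by
    rw [Real.rpow_sub two_pos, Real.rpow_sub two_pos,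
      Real.rpow_logb two_pos (by norm_num) hn', Real.rpow_one, Real.rpow_natCast,
      hKdef, pow_succ]
    ring
  have hy : (2 : ℝ) ^ ((1:ℝ) - (Real.logb 2 n - (k:ℝ))) = (2:ℝ)^K / n := by
    rw [Real.rpow_sub two_pos, Real.rpow_one, Real.rpow_sub two_pos,
      Real.rpow_logb two_pos (by norm_num) hn', Real.rpow_natCast,
      hKdef, pow_succ]
    field_simp
  rw [hx, hy, Ta_eval, Sdigq_eq]
  -- reflect the Ta sum
  have hrefl : ∑ m ∈ Finset.range K, (1/(2*q))^m * tau ((n:ℝ) * 2^m / 2^K)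
      = ∑ i ∈ Finset.range K, (1/(2*q))^(k-i) * tau ((n:ℝ)/2^(i+1)) := by
    rw [← Finset.sum_range_reflect]
    apply Finset.sum_congr rfl
    intro j hj
    simp only [Finset.mem_range] at hj
    have h1 : K - 1 - j = k - j := by omega
    have h2 : (n:ℝ) * 2^(k-j) / 2^K = (n:ℝ)/2^(j+1) := by
      rw [hKdef, show k + 1 = (k-j) + (j+1) by omega, pow_add]
      have : (2:ℝ)^(k-j) ≠ 0 := by positivity
      field_simp
    rw [h1, h2]
  rw [hrefl]
  -- push everything into a single sum and compare termwise
  rw [Finset.mul_sum]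
  have hgeom : (1 - q ^ K) / (1 - q) = ∑ i ∈ Finset.range K, q^i := by
    rw [geom_sum_eq hq1, ← neg_div_neg_eq]
    ring_nf
  rw [hgeom, mul_assoc (q^k), Finset.mul_sum, Finset.mul_sum, ← Finset.sum_sub_distrib, Finset.mul_sum]
  apply Finset.sum_congr rfl
  intro i hi
  simp only [Finset.mem_range] at hi
  have hik : i ≤ k := by omega
  have eqk : q^k = q^(k-i)*q^i := by rw [← pow_add]; congr 1; omega
  have e2 : (2:ℝ)^K = 2^(k-i)*2^(i+1) := by rw [← pow_add]; congr 1; omega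
  have hne1 : (2:ℝ)^(k-i) ≠ 0 := by positivity
  have hne2 : q^(k-i) ≠ 0 := pow_ne_zero _ hq0
  have hne3 : (2:ℝ)^(i+1) ≠ 0 := by positivity
  rw [eqk, e2, div_pow, one_pow, mul_pow]
  field_simp
  ring
end
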